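/- There exists a unary language with entropy exactly 1: the language UInf = {2^{n + 2^{n+m}} + k | n ∈ ℕ, m ≤ 2^{n+1} − 1, k ∈ φ_n(m)} ⊆ ℕ (where φ_n: {0,…,2^{n+1}−1} → P({0,…,n}) are bijections) satisfies ind Θ_n(UInf) ≥ 2^{n+1} for all n, hence η(UInf) = 1. -/

import Mathlib

open Filter

/-- The `n`-th Myhill–Nerode approximation: `u ~ v` iff all witnesses of length at most `n`
agree. -/
def thetaN {α : Type*} (L : Set (List α)) (n : ℕ) (u v : List α) : Prop :=
  ∀ w : List α, w.length ≤ n → ((u ++ w) ∈ L ↔ (v ++ w) ∈ L)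

/-- The index (number of classes) of `thetaN L n`. -/
noncomputable def indexN {α : Type*} (L : Set (List α)) (n : ℕ) : ℕ :=
  Nat.card (Quot (thetaN L n))

/-- Topological entropy of a language, with values in `[0,∞]`. -/
noncomputable def entropy {α : Type*} (L : Set (List α)) : ENNReal :=
  Filter.limsup (fun n : ℕ => ENNReal.ofReal (Real.logb 2 (indexN L n) / n)) Filter.atTop

/-- Myhill–Nerode approximation for unary languages (as subsets of `ℕ`). -/
def thetaNatN (L : Set ℕ) (n : ℕ) (a b : ℕ) : Prop :=
  ∀ k ≤ n, ((a + k) ∈ L ↔ (b + k) ∈ L)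

noncomputable def indexNatN (L : Set ℕ) (n : ℕ) : ℕ :=
  Nat.card (Quot (thetaNatN L n))

noncomputable def entropyNat (L : Set ℕ) : ENNReal :=
  Filter.limsup (fun n : ℕ => ENNReal.ofReal (Real.logb 2 (indexNatN L n) / n)) Filter.atTop

/-! ### Auxiliary lemmas -/

lemma pow_add_inj' {a b k k' : ℕ} (hk : k < 2 ^ a) (hk' : k' < 2 ^ b)
    (h : 2 ^ a + k = 2 ^ b + k') : a = b ∧ k = k' := by
  rcases lt_trichotomy a b with hab | hab | hab
  · have h1 : 2 ^ a + k < 2 ^ (a + 1) := by rw [pow_succ]; omega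
    have h2 : 2 ^ (a + 1) ≤ 2 ^ b := Nat.pow_le_pow_right (by norm_num) hab
    omega
  · subst hab; omega
  · have h1 : 2 ^ b + k' < 2 ^ (b + 1) := by rw [pow_succ]; omega
    have h2 : 2 ^ (b + 1) ≤ 2 ^ a := Nat.pow_le_pow_right (by norm_num) hab
    omega

lemma exp_inj' {n m n' m' : ℕ} (h : n + 2 ^ (n + m) = n' + 2 ^ (n' + m')) :
    n = n' ∧ m = m' := by
  have hn : n < 2 ^ (n + m) := lt_of_le_of_lt (Nat.le_add_right n m) Nat.lt_two_pow_self
  have hn' : n' < 2 ^ (n' + m') := lt_of_le_of_lt (Nat.le_add_right n' m') Nat.lt_two_pow_self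
  have := pow_add_inj' hn hn' (by omega)
  omega

section Main
variable (φ : ℕ → ℕ → Finset ℕ)
    (hφ : ∀ n : ℕ, Set.BijOn (φ n) (Set.Iio (2 ^ (n + 1)))
      {A : Finset ℕ | A ⊆ Finset.range (n + 1)})

def LU : Set ℕ := {x : ℕ | ∃ n m k : ℕ, m ≤ 2 ^ (n + 1) - 1 ∧ k ∈ φ n m ∧
          x = 2 ^ (n + 2 ^ (n + m)) + k}

include hφ in
lemma mem_LU {n m k : ℕ} (hm : m < 2 ^ (n + 1)) (hk : k ≤ n) :
    2 ^ (n + 2 ^ (n + m)) + k ∈ LU φ ↔ k ∈ φ n m := by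
  constructor
  · rintro ⟨n', m', k', hm', hk', heq⟩
    have hm'2 : m' < 2 ^ (n' + 1) := by have := Nat.one_le_two_pow (n := n' + 1); omega
    have hk'n : k' ≤ n' := by
      have := (hφ n').mapsTo hm'2 hk'
      simpa [Finset.mem_range, Nat.lt_succ_iff] using Finset.mem_range.mp (this)
    have hklt : k < 2 ^ (n + 2 ^ (n + m)) :=
      lt_of_le_of_lt (le_trans hk (Nat.le_add_right _ _)) Nat.lt_two_pow_self
    have hk'lt : k' < 2 ^ (n' + 2 ^ (n' + m')) :=
      lt_of_le_of_lt (le_trans hk'n (Nat.le_add_right _ _)) Nat.lt_two_pow_self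
    obtain ⟨he, hkk⟩ := pow_add_inj' hklt hk'lt heq
    obtain ⟨hn, hm⟩ := exp_inj' he
    subst hn; subst hkk
    rwa [hm]
  · intro hmem
    exact ⟨n, m, k, by omega, hmem, rfl⟩

lemma theta_equiv (L : Set ℕ) (n : ℕ) : Equivalence (thetaNatN L n) :=
  ⟨fun _ _ _ => Iff.rfl, fun h k hk => (h k hk).symm, fun h h' k hk => (h k hk).trans (h' k hk)⟩

lemma quot_inj (L : Set ℕ) (n : ℕ) :
    ∃ G : Quot (thetaNatN L n) → (Fin (n + 1) → Bool), Function.Injective G := by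
  classical
  have h : ∀ a b, thetaNatN L n a b →
      (fun k : Fin (n + 1) => decide ((a + (k : ℕ)) ∈ L)) =
      (fun k : Fin (n + 1) => decide ((b + (k : ℕ)) ∈ L)) := by
    intro a b hab
    funext k
    simp only [decide_eq_decide]
    exact hab k (Nat.lt_succ_iff.mp k.isLt)
  set G : Quot (thetaNatN L n) → (Fin (n + 1) → Bool) := Quot.lift _ h with hG
  have hGinj : Function.Injective G := by
    intro x y
    induction x using Quot.ind with | _ a =>
    induction y using Quot.ind with | _ b =>
    intro hxy
    apply Quot.sound
    intro k hk
    have := congrFun hxy ⟨k, Nat.lt_succ_of_le hk⟩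
    simpa only [hG, decide_eq_decide] using this
  exact ⟨G, hGinj⟩

lemma finite_quot (L : Set ℕ) (n : ℕ) : Finite (Quot (thetaNatN L n)) := by
  obtain ⟨G, hG⟩ := quot_inj L n
  exact Finite.of_injective G hG

lemma index_le (L : Set ℕ) (n : ℕ) : indexNatN L n ≤ 2 ^ (n + 1) := by
  obtain ⟨G, hG⟩ := quot_inj L n
  calc indexNatN L n ≤ Nat.card (Fin (n + 1) → Bool) := Nat.card_le_card_of_injective G hG
    _ = 2 ^ (n + 1) := by simp [Nat.card_eq_fintype_card]

include hφ in
lemma index_ge (n : ℕ) : 2 ^ (n + 1) ≤ indexNatN (LU φ) n := by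
  set L := LU φ
  set f : Fin (2 ^ (n + 1)) → Quot (thetaNatN L n) :=
    fun m => Quot.mk _ (2 ^ (n + 2 ^ (n + (m : ℕ)))) with hf
  have hfinj : Function.Injective f := by
    intro m₁ m₂ hm
    by_contra hne
    have hrel : thetaNatN L n (2 ^ (n + 2 ^ (n + (m₁ : ℕ)))) (2 ^ (n + 2 ^ (n + (m₂ : ℕ)))) :=
      (theta_equiv L n).eqvGen_iff.mp (Quot.eq.mp hm)
    have hφne : φ n m₁ ≠ φ n m₂ := fun h =>
      hne (Fin.ext ((hφ n).injOn m₁.isLt m₂.isLt h))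
    rw [Ne, Finset.ext_iff, not_forall] at hφne
    obtain ⟨k, hkne⟩ := hφne
    have hk1 : k ≤ n := by
      by_contra hkn
      have h1 : k ∉ φ n m₁ := fun h => hkn (by
        have := (hφ n).mapsTo m₁.isLt h
        have := Finset.mem_range.mp this; omega)
      have h2 : k ∉ φ n m₂ := fun h => hkn (by
        have := (hφ n).mapsTo m₂.isLt h
        have := Finset.mem_range.mp this; omega)
      exact hkne (by simp [h1, h2])
    have := hrel k hk1
    rw [mem_LU φ hφ m₁.isLt hk1, mem_LU φ hφ m₂.isLt hk1] at this
    exact hkne this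
  have hfin : Finite (Quot (thetaNatN L n)) := finite_quot L n
  calc 2 ^ (n + 1) = Nat.card (Fin (2 ^ (n + 1))) := by simp
    _ ≤ Nat.card (Quot (thetaNatN L n)) := Nat.card_le_card_of_injective f hfinj
    _ = indexNatN L n := rfl

end Main

lemma tendsto_aux' : Tendsto (fun n : ℕ => ENNReal.ofReal (((n : ℝ) + 1) / n)) atTop (nhds 1) := by
  have h : Tendsto (fun n : ℕ => ((n : ℝ) + 1) / n) atTop (nhds 1) := by
    have h1 : Tendsto (fun n : ℕ => 1 + 1 / (n : ℝ)) atTop (nhds 1) := by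
      simpa using (tendsto_const_nhds (x := (1:ℝ))).add tendsto_one_div_atTop_nhds_zero_nat
    apply h1.congr'
    filter_upwards [eventually_gt_atTop 0] with n hn
    field_simp
  have := (ENNReal.continuous_ofReal.tendsto 1).comp h
  rw [ENNReal.ofReal_one] at this
  exact this

lemma logb_calc' (n : ℕ) : Real.logb 2 ((2 ^ (n + 1) : ℕ) : ℝ) = (n : ℝ) + 1 := by
  push_cast
  rw [Real.logb_pow, Real.logb_self_eq_one (by norm_num : (1:ℝ) < 2)]
  push_cast; ring

theorem entropy_UInf (φ : ℕ → ℕ → Finset ℕ)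
    (hφ : ∀ n : ℕ, Set.BijOn (φ n) (Set.Iio (2 ^ (n + 1)))
      {A : Finset ℕ | A ⊆ Finset.range (n + 1)}) :
    (∀ n : ℕ, 2 ^ (n + 1) ≤ indexNatN
        {x : ℕ | ∃ n m k : ℕ, m ≤ 2 ^ (n + 1) - 1 ∧ k ∈ φ n m ∧
          x = 2 ^ (n + 2 ^ (n + m)) + k} n) ∧
      entropyNat {x : ℕ | ∃ n m k : ℕ, m ≤ 2 ^ (n + 1) - 1 ∧ k ∈ φ n m ∧
          x = 2 ^ (n + 2 ^ (n + m)) + k} = 1 := by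
  constructor
  · exact fun n => index_ge φ hφ n
  · have heq : ∀ n, indexNatN (LU φ) n = 2 ^ (n + 1) :=
      fun n => le_antisymm (index_le _ n) (index_ge φ hφ n)
    show entropyNat (LU φ) = 1
    unfold entropyNat
    have hfun : (fun n : ℕ => ENNReal.ofReal (Real.logb 2 (indexNatN (LU φ) n) / n)) =
        fun n : ℕ => ENNReal.ofReal (((n : ℝ) + 1) / n) := by
      funext n
      rw [heq n, logb_calc' n]
    rw [hfun, tendsto_aux'.limsup_eq]
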